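/- arXiv:1407.2224 — 4 statements merged into one kernel-verified Lean document; each statement's English description precedes it below -/
import Mathlib

section
/- The smeared Pauli observables A_k^λ(±) = (1/2)(I ± λσ_k) for k ∈ {x,z} are jointly measurable whenever λ ≤ 1/√2: the operators G(i,j) = (1/4)(I + iλσ_x + jλσ_z), i,j ∈ {±1}, are positive semidefinite, sum to the identity, and have marginals A_x^λ and A_z^λ. -/
open Matrix ComplexOrder

noncomputable def σx : Matrix (Fin 2) (Fin 2) ℂ := !![0, 1; 1, 0]
noncomputable def σz : Matrix (Fin 2) (Fin 2) ℂ := !![1, 0; 0, -1]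

/-- The smeared Pauli observable `(1/2)(I + s·l·σ)` with smearing `l` and sign `s`. -/
noncomputable def smeared (σ : Matrix (Fin 2) (Fin 2) ℂ) (l s : ℝ) :
    Matrix (Fin 2) (Fin 2) ℂ :=
  (1 / 2 : ℂ) • ((1 : Matrix (Fin 2) (Fin 2) ℂ) + ((s * l : ℝ) : ℂ) • σ)

/-- The candidate joint observable `G i j = (1/4)(I + i·l·σx + j·l·σz)`. -/
noncomputable def G (l i j : ℝ) : Matrix (Fin 2) (Fin 2) ℂ :=
  (1 / 4 : ℂ) • ((1 : Matrix (Fin 2) (Fin 2) ℂ)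
    + ((i * l : ℝ) : ℂ) • σx + ((j * l : ℝ) : ℂ) • σz)

lemma psd2 (p r q : ℝ) (hp : 0 ≤ p) (hr : 0 ≤ r) (h : q ^ 2 ≤ p * r) :
    (!![(p : ℂ), (q : ℂ); (q : ℂ), (r : ℂ)]).PosSemidef := by
  rw [Matrix.posSemidef_iff_dotProduct_mulVec]
  constructor
  · ext i j
    fin_cases i <;> fin_cases j <;> simp [Matrix.conjTranspose_apply]
  · intro x
    have expand : star x ⬝ᵥ (!![(p : ℂ), (q : ℂ); (q : ℂ), (r : ℂ)]).mulVec x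
        = (p : ℂ) * (starRingEnd ℂ (x 0) * x 0) + (r : ℂ) * (starRingEnd ℂ (x 1) * x 1)
          + (q : ℂ) * (starRingEnd ℂ (x 0) * x 1 + starRingEnd ℂ (x 1) * x 0) := by
      simp [dotProduct, mulVec, Fin.sum_univ_two]
      ring
    rw [expand, Complex.le_def]
    set a1 := (x 0).re; set a2 := (x 0).im; set b1 := (x 1).re; set b2 := (x 1).im
    constructor
    · simp only [Complex.add_re, Complex.mul_re, Complex.ofReal_re, Complex.ofReal_im,
        Complex.conj_re, Complex.conj_im, Complex.add_im, Complex.mul_im, Complex.zero_re]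
      rcases eq_or_lt_of_le hp with hp' | hp'
      · have hq : q = 0 := by nlinarith [sq_nonneg q]
        subst hq
        rw [← hp']
        nlinarith [sq_nonneg b1, sq_nonneg b2]
      · nlinarith [sq_nonneg (p*a1+q*b1), sq_nonneg (p*a2+q*b2),
          mul_nonneg (sub_nonneg.2 h) (add_nonneg (sq_nonneg b1) (sq_nonneg b2)), hp']
    · simp only [Complex.add_im, Complex.mul_im, Complex.ofReal_re, Complex.ofReal_im,
        Complex.conj_re, Complex.conj_im, Complex.add_re, Complex.mul_re, Complex.zero_im]
      ring

lemma G_eq (l i j : ℝ) : G l i j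
    = !![((((1+j*l)/4 : ℝ)) : ℂ), (((i*l/4 : ℝ)) : ℂ);
         (((i*l/4 : ℝ)) : ℂ), ((((1-j*l)/4 : ℝ)) : ℂ)] := by
  ext a b
  fin_cases a <;> fin_cases b <;>
    simp [G, σx, σz, Matrix.one_apply] <;> push_cast <;> ring

theorem stmt_2 (l : ℝ) (hl0 : 0 ≤ l) (hl : l ≤ 1 / Real.sqrt 2) :
    (∀ i ∈ ({-1, 1} : Set ℝ), ∀ j ∈ ({-1, 1} : Set ℝ), (G l i j).PosSemidef) ∧
    G l 1 1 + G l 1 (-1) + G l (-1) 1 + G l (-1) (-1) = 1 ∧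
    (∀ i ∈ ({-1, 1} : Set ℝ), G l i 1 + G l i (-1) = smeared σx l i) ∧
    (∀ j ∈ ({-1, 1} : Set ℝ), G l 1 j + G l (-1) j = smeared σz l j) := by
  have h2 : l ^ 2 ≤ 1 / 2 := by
    have : l ^ 2 ≤ (1 / Real.sqrt 2) ^ 2 := by
      apply pow_le_pow_left₀ hl0 hl
    calc l ^ 2 ≤ (1 / Real.sqrt 2) ^ 2 := this
      _ = 1 / 2 := by
        rw [div_pow, one_pow, Real.sq_sqrt (by norm_num : (2:ℝ) ≥ 0)]
  have hl1 : l ≤ 1 := by nlinarith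
  refine ⟨?_, ?_, ?_, ?_⟩
  · rintro i (rfl | rfl) j (rfl | rfl) <;>
    · rw [G_eq]
      apply psd2 <;> nlinarith
  · ext a b
    fin_cases a <;> fin_cases b <;>
      simp [G, σx, σz, Matrix.one_apply] <;> push_cast <;> ring
  · rintro i (rfl | rfl) <;>
    · ext a b
      fin_cases a <;> fin_cases b <;>
        simp [G, σx, σz, smeared, Matrix.one_apply] <;> push_cast <;> ring
  · rintro j (rfl | rfl) <;>
    · ext a b
      fin_cases a <;> fin_cases b <;>
        simp [G, σx, σz, smeared, Matrix.one_apply] <;> push_cast <;> ring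
end

section
/- If a collection of POVMs {A_k} on Alice's side is jointly measurable, then for every bipartite state ρ_AB the assemblage ρ_{x|k} = Tr_A[(A_k(x) ⊗ I) ρ_AB] admits a hidden state model: there exist positive semidefinite operators σ_λ with Tr(∑_λ σ_λ) = 1 and probabilities p(x|k,λ) with ∑_x p(x|k,λ) = 1 such that ρ_{x|k} = ∑_λ p(x|k,λ) σ_λ for all x, k. -/
open Matrix ComplexOrder Kronecker

variable {dA dB : ℕ}

/-- Partial trace over the first (Alice's) tensor factor. -/
noncomputable def ptraceA (ρ : Matrix (Fin dA × Fin dB) (Fin dA × Fin dB) ℂ) :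
    Matrix (Fin dB) (Fin dB) ℂ :=
  Matrix.of fun j j' => ∑ i : Fin dA, ρ (i, j) (i, j')

lemma ptraceA_sum {m : ℕ} (f : Fin m → Matrix (Fin dA × Fin dB) (Fin dA × Fin dB) ℂ) :
    ptraceA (∑ lam, f lam) = ∑ lam, ptraceA (f lam) := by
  ext j j'
  simp only [ptraceA, Matrix.of_apply, Matrix.sum_apply]
  exact Finset.sum_comm

lemma ptraceA_smul (c : ℂ) (ρ : Matrix (Fin dA × Fin dB) (Fin dA × Fin dB) ℂ) :
    ptraceA (c • ρ) = c • ptraceA ρ := by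
  ext j j'
  simp only [ptraceA, Matrix.of_apply, Matrix.smul_apply, smul_eq_mul, Finset.mul_sum]

lemma trace_ptraceA (ρ : Matrix (Fin dA × Fin dB) (Fin dA × Fin dB) ℂ) :
    (ptraceA ρ).trace = ρ.trace := by
  simp only [ptraceA, Matrix.trace, Matrix.diag, Matrix.of_apply, Fintype.sum_prod_type]
  rw [Finset.sum_comm]

lemma ptraceA_mul_comm (M : Matrix (Fin dA) (Fin dA) ℂ)
    (ρ : Matrix (Fin dA × Fin dB) (Fin dA × Fin dB) ℂ) :
    ptraceA ((M ⊗ₖ (1 : Matrix (Fin dB) (Fin dB) ℂ)) * ρ)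
      = ptraceA (ρ * (M ⊗ₖ (1 : Matrix (Fin dB) (Fin dB) ℂ))) := by
  ext j j'
  simp only [ptraceA, Matrix.of_apply, Matrix.mul_apply, Matrix.kroneckerMap_apply,
    Fintype.sum_prod_type, Matrix.one_apply]
  simp only [mul_ite, mul_zero, mul_one, ite_mul, zero_mul, Finset.sum_ite_eq,
    Finset.sum_ite_eq', Finset.mem_univ, if_true]
  rw [Finset.sum_comm]
  exact Finset.sum_congr rfl fun i _ => Finset.sum_congr rfl fun i' _ => mul_comm _ _

lemma kronecker_conjTranspose_self {M : Matrix (Fin dA) (Fin dA) ℂ}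
    {N : Matrix (Fin dB) (Fin dB) ℂ} (hM : M.IsHermitian) (hN : N.IsHermitian) :
    (M ⊗ₖ N)ᴴ = M ⊗ₖ N := by
  ext ⟨i, j⟩ ⟨i', j'⟩
  simp only [Matrix.conjTranspose_apply, Matrix.kroneckerMap_apply, star_mul']
  rw [← Matrix.conjTranspose_apply, ← Matrix.conjTranspose_apply, hM.eq, hN.eq]

lemma sum_kronecker_one {m : ℕ} (G : Fin m → Matrix (Fin dA) (Fin dA) ℂ) :
    ((∑ lam, G lam) ⊗ₖ (1 : Matrix (Fin dB) (Fin dB) ℂ))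
      = ∑ lam, G lam ⊗ₖ (1 : Matrix (Fin dB) (Fin dB) ℂ) := by
  ext ⟨i, j⟩ ⟨i', j'⟩
  simp [Matrix.sum_apply, Finset.sum_mul]

lemma ptraceA_posSemidef {ρ : Matrix (Fin dA × Fin dB) (Fin dA × Fin dB) ℂ}
    (hρ : ρ.PosSemidef) : (ptraceA ρ).PosSemidef := by
  refine Matrix.PosSemidef.of_dotProduct_mulVec_nonneg ?_ ?_
  · ext j j'
    simp only [Matrix.conjTranspose_apply, ptraceA, Matrix.of_apply, star_sum]
    refine Finset.sum_congr rfl fun i _ => ?_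
    rw [← Matrix.conjTranspose_apply, hρ.1.eq]
  · intro v
    have key : star v ⬝ᵥ (ptraceA ρ) *ᵥ v
        = ∑ i : Fin dA, star (fun p : Fin dA × Fin dB => if p.1 = i then v p.2 else 0) ⬝ᵥ
            ρ *ᵥ (fun p : Fin dA × Fin dB => if p.1 = i then v p.2 else 0) := by
      have hterm : ∀ i : Fin dA,
          star (fun p : Fin dA × Fin dB => if p.1 = i then v p.2 else 0) ⬝ᵥ
            ρ *ᵥ (fun p : Fin dA × Fin dB => if p.1 = i then v p.2 else 0)
          = ∑ j : Fin dB, ∑ j' : Fin dB, star (v j) * (ρ (i, j) (i, j') * v j') := by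
        intro i
        simp [dotProduct, Matrix.mulVec, Fintype.sum_prod_type,
          apply_ite (starRingEnd ℂ), ite_mul, zero_mul, mul_ite, mul_zero, Finset.mul_sum]
      rw [Finset.sum_congr rfl fun i _ => hterm i]
      simp only [dotProduct, Matrix.mulVec, ptraceA, Matrix.of_apply,
        Finset.mul_sum, Finset.sum_mul, Pi.star_apply]
      conv_rhs => rw [Finset.sum_comm]
      refine Finset.sum_congr rfl fun j _ => ?_
      rw [Finset.sum_comm]
    rw [key]
    exact Finset.sum_nonneg fun i _ => hρ.dotProduct_mulVec_nonneg _

lemma sum_smul_kronecker_one_mul {m : ℕ} (c : Fin m → ℂ)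
    (G : Fin m → Matrix (Fin dA) (Fin dA) ℂ)
    (ρ : Matrix (Fin dA × Fin dB) (Fin dA × Fin dB) ℂ) :
    ((∑ lam, c lam • G lam) ⊗ₖ (1 : Matrix (Fin dB) (Fin dB) ℂ)) * ρ
      = ∑ lam, c lam • ((G lam ⊗ₖ (1 : Matrix (Fin dB) (Fin dB) ℂ)) * ρ) := by
  have hs : ((∑ lam, c lam • G lam) ⊗ₖ (1 : Matrix (Fin dB) (Fin dB) ℂ))
      = ∑ lam, (c lam • G lam) ⊗ₖ (1 : Matrix (Fin dB) (Fin dB) ℂ) := by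
    ext ⟨i, j⟩ ⟨i', j'⟩
    simp [Matrix.kroneckerMap_apply, Matrix.sum_apply, Finset.sum_mul]
  rw [hs, Finset.sum_mul]
  refine Finset.sum_congr rfl fun lam _ => ?_
  rw [Matrix.smul_kronecker, Matrix.smul_mul]

/-- Joint measurability of a finite collection of POVMs `A k` with outcomes in `X`. -/
def JointlyMeasurable {n : ℕ} {K X : Type*} [Fintype X]
    (A : K → X → Matrix (Fin n) (Fin n) ℂ) : Prop :=
  ∃ (m : ℕ) (G : Fin m → Matrix (Fin n) (Fin n) ℂ) (D : Fin m → K → X → ℝ),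
    (∀ lam, (G lam).PosSemidef) ∧ (∑ lam, G lam = 1) ∧
    (∀ lam k x, 0 ≤ D lam k x) ∧ (∀ lam k, ∑ x, D lam k x = 1) ∧
    (∀ k x, A k x = ∑ lam, ((D lam k x : ℝ) : ℂ) • G lam)

/-- A hidden state model (local hidden state model) for an assemblage. -/
def HiddenStateModel {d : ℕ} {K X : Type*} [Fintype X]
    (ρ : K → X → Matrix (Fin d) (Fin d) ℂ) : Prop :=
  ∃ (m : ℕ) (σ : Fin m → Matrix (Fin d) (Fin d) ℂ) (p : Fin m → K → X → ℝ),
    (∀ lam, (σ lam).PosSemidef) ∧ (∑ lam, (σ lam).trace = 1) ∧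
    (∀ lam k x, 0 ≤ p lam k x) ∧ (∀ lam k, ∑ x, p lam k x = 1) ∧
    (∀ k x, ρ k x = ∑ lam, ((p lam k x : ℝ) : ℂ) • σ lam)

theorem stmt_5 {K X : Type*} [Fintype K] [Fintype X]
    (A : K → X → Matrix (Fin dA) (Fin dA) ℂ)
    (hpos : ∀ k x, (A k x).PosSemidef) (hsum : ∀ k, ∑ x, A k x = 1)
    (hJM : JointlyMeasurable A)
    (ρAB : Matrix (Fin dA × Fin dB) (Fin dA × Fin dB) ℂ)
    (hρ : ρAB.PosSemidef) (hρtr : ρAB.trace = 1) :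
    HiddenStateModel (fun k x =>
      ptraceA ((A k x ⊗ₖ (1 : Matrix (Fin dB) (Fin dB) ℂ)) * ρAB)) := by
  obtain ⟨m, G, D, hGpos, hGsum, hD0, hD1, hA⟩ := hJM
  refine ⟨m, fun lam => ptraceA ((G lam ⊗ₖ (1 : Matrix (Fin dB) (Fin dB) ℂ)) * ρAB),
    D, ?_, ?_, hD0, hD1, ?_⟩
  · intro lam
    dsimp only
    have h := (hGpos lam)
    obtain ⟨S, hS1, hS2⟩ : ∃ S : Matrix (Fin dA) (Fin dA) ℂ, S.IsHermitian ∧ S * S = G lam := by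
      open scoped MatrixOrder in
      exact ⟨CFC.sqrt (G lam), (Matrix.nonneg_iff_posSemidef.mp (CFC.sqrt_nonneg _)).isHermitian,
        CFC.sqrt_mul_sqrt_self _ (Matrix.nonneg_iff_posSemidef.mpr h)⟩
    have key : (G lam ⊗ₖ (1 : Matrix (Fin dB) (Fin dB) ℂ)) * ρAB
        = (S ⊗ₖ (1 : Matrix (Fin dB) (Fin dB) ℂ)) *
          ((S ⊗ₖ (1 : Matrix (Fin dB) (Fin dB) ℂ)) * ρAB) := by
      rw [← Matrix.mul_assoc, ← Matrix.mul_kronecker_mul, hS2, Matrix.one_mul]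
    rw [key, ptraceA_mul_comm]
    have hH : (S ⊗ₖ (1 : Matrix (Fin dB) (Fin dB) ℂ))ᴴ
        = S ⊗ₖ (1 : Matrix (Fin dB) (Fin dB) ℂ) :=
      kronecker_conjTranspose_self hS1 (Matrix.isHermitian_one)
    have : (((S ⊗ₖ (1 : Matrix (Fin dB) (Fin dB) ℂ)) * ρAB) *
        (S ⊗ₖ (1 : Matrix (Fin dB) (Fin dB) ℂ))).PosSemidef := by
      have := hρ.mul_mul_conjTranspose_same (S ⊗ₖ (1 : Matrix (Fin dB) (Fin dB) ℂ))
      rwa [hH] at this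
    exact ptraceA_posSemidef this
  · dsimp only
    rw [← Matrix.trace_sum, ← ptraceA_sum]
    have : (∑ lam, (G lam ⊗ₖ (1 : Matrix (Fin dB) (Fin dB) ℂ)) * ρAB) = ρAB := by
      rw [← Finset.sum_mul, ← sum_kronecker_one, hGsum, Matrix.one_kronecker_one,
        Matrix.one_mul]
    rw [this, trace_ptraceA, hρtr]
  · intro k x
    dsimp only
    rw [hA k x]
    rw [sum_smul_kronecker_one_mul]
    rw [ptraceA_sum]
    congr 1; funext lam
    rw [ptraceA_smul]
end

section
/- Two sharp projective measurements given by orthogonal projections P and Q (with POVMs {P, I−P} and {Q, I−Q}) are jointly measurable if and only if [P,Q] = 0. -/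
open Matrix ComplexOrder

/-- The dichotomic sharp POVM `{P, 1 - P}` associated to a projection `P`. -/
def sharpPOVM {d : ℕ} (P : Matrix (Fin d) (Fin d) ℂ) : Bool → Matrix (Fin d) (Fin d) ℂ :=
  fun b => if b then P else 1 - P

/-- A hermitian idempotent matrix is positive semidefinite. -/
lemma psd_of_proj {d : ℕ} {M : Matrix (Fin d) (Fin d) ℂ} (h : M * M = M)
    (hh : M.IsHermitian) : M.PosSemidef := by
  have : M = Mᴴ * M := by rw [hh.eq, h]
  rw [this]
  exact posSemidef_conjTranspose_mul_self M

/-- A matrix that is both PSD and negative-semidefinite is zero. -/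
lemma psd_neg_zero {d : ℕ} {M : Matrix (Fin d) (Fin d) ℂ} (h1 : M.PosSemidef)
    (h2 : (-M).PosSemidef) : M = 0 := by
  have hz : ∀ x : Fin d → ℂ, M *ᵥ x = 0 := by
    intro x
    rw [← h1.dotProduct_mulVec_zero_iff]
    have ha := h1.dotProduct_mulVec_nonneg x
    have hb := h2.dotProduct_mulVec_nonneg x
    rw [neg_mulVec, dotProduct_neg] at hb
    exact le_antisymm (neg_nonneg.mp hb) ha
  ext i j
  have := congrFun (hz (Pi.single j 1)) i
  simpa [mulVec_single] using this

open scoped MatrixOrder in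
/-- If `A, C` are PSD with `A + C = R` a hermitian projection, then `R * A = A` and `A * R = A`. -/
lemma proj_absorb {d : ℕ} {A C R : Matrix (Fin d) (Fin d) ℂ}
    (hA : A.PosSemidef) (hC : C.PosSemidef) (hsum : A + C = R)
    (hR : R * R = R) (hRh : R.IsHermitian) : R * A = A ∧ A * R = A := by
  set S : Matrix (Fin d) (Fin d) ℂ := 1 - R with hS
  have hSh : Sᴴ = S := by simp [hS, hRh.eq]
  have hSRS : S * R * S = 0 := by
    have : S * R = 0 := by simp [hS, sub_mul, hR]
    rw [this, zero_mul]
  have hSASpsd : (S * A * S).PosSemidef := by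
    have := hA.mul_mul_conjTranspose_same S
    rwa [hSh] at this
  have hSCSpsd : (S * C * S).PosSemidef := by
    have := hC.mul_mul_conjTranspose_same S
    rwa [hSh] at this
  have hsum2 : S * A * S + S * C * S = 0 := by
    rw [← add_mul, ← mul_add, hsum, hSRS]
  have hSAS : S * A * S = 0 := by
    apply psd_neg_zero hSASpsd
    rw [show -(S * A * S) = S * C * S from neg_eq_of_add_eq_zero_right hsum2]
    exact hSCSpsd
  have hsq : CFC.sqrt A * CFC.sqrt A = A := CFC.sqrt_mul_sqrt_self A hA.nonneg
  have hsqh : (CFC.sqrt A)ᴴ = CFC.sqrt A := (CFC.sqrt_nonneg A).posSemidef.1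
  have hzero : CFC.sqrt A * S = 0 := by
    rw [← conjTranspose_mul_self_eq_zero]
    rw [conjTranspose_mul, hSh, hsqh]
    calc S * CFC.sqrt A * (CFC.sqrt A * S) = S * (CFC.sqrt A * CFC.sqrt A) * S := by noncomm_ring
      _ = 0 := by rw [hsq, hSAS]
  have hAS : A * S = 0 := by
    rw [← hsq, mul_assoc, hzero, mul_zero]
  have hAR : A * R = A := by
    have : A * (1 - R) = 0 := hAS
    rw [mul_sub, mul_one, sub_eq_zero] at this
    exact this.symm
  refine ⟨?_, hAR⟩
  have := congrArg conjTranspose hAR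
  rwa [conjTranspose_mul, hRh.eq, hA.1.eq] at this

theorem stmt_16 {d : ℕ} (P Q : Matrix (Fin d) (Fin d) ℂ)
    (hP : P * P = P) (hPherm : P.IsHermitian)
    (hQ : Q * Q = Q) (hQherm : Q.IsHermitian) :
    (∃ G : Bool → Bool → Matrix (Fin d) (Fin d) ℂ,
        (∀ i j, (G i j).PosSemidef) ∧
        (∑ i : Bool, ∑ j : Bool, G i j = 1) ∧
        (∀ i, ∑ j : Bool, G i j = sharpPOVM P i) ∧
        (∀ j, ∑ i : Bool, G i j = sharpPOVM Q j)) ↔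
      Commute P Q := by
  have hP'idem : (1 - P) * (1 - P) = 1 - P := by
    rw [sub_mul, mul_sub, mul_sub, hP]; noncomm_ring
  have hQ'idem : (1 - Q) * (1 - Q) = 1 - Q := by
    rw [sub_mul, mul_sub, mul_sub, hQ]; noncomm_ring
  have hP'h : (1 - P).IsHermitian := by
    simpa [Matrix.IsHermitian] using hPherm.eq
  have hQ'h : (1 - Q).IsHermitian := by
    simpa [Matrix.IsHermitian] using hQherm.eq
  constructor
  · rintro ⟨G, hpsd, htot, hmP, hmQ⟩
    have e1 : G true true + G true false = P := by
      simpa [Fintype.sum_bool, sharpPOVM] using hmP true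
    have e2 : G false true + G false false = 1 - P := by
      simpa [Fintype.sum_bool, sharpPOVM] using hmP false
    have e3 : G true true + G false true = Q := by
      simpa [Fintype.sum_bool, sharpPOVM] using hmQ true
    obtain ⟨hPA, hAP⟩ := proj_absorb (hpsd true true) (hpsd true false) e1 hP hPherm
    obtain ⟨hQA, hAQ⟩ := proj_absorb (hpsd true true) (hpsd false true) e3 hQ hQherm
    obtain ⟨hPB, hBP⟩ := proj_absorb (hpsd false false) (hpsd false true)
      (by rw [add_comm]; exact e2) hP'idem hP'h
    have ht : G true true + G true false + (G false true + G false false) = 1 := by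
      simpa [Fintype.sum_bool] using htot
    have h5 : G true false = P - G true true := by
      rw [eq_sub_iff_add_eq, add_comm]; exact e1
    have h6 : G false true = Q - G true true := by
      rw [eq_sub_iff_add_eq, add_comm]; exact e3
    rw [h5, h6] at ht
    have hBform : G false false = 1 - P - Q + G true true := by
      calc G false false
          = (G true true + (P - G true true) + ((Q - G true true) + G false false))
              - (G true true + (P - G true true) + (Q - G true true)) := by abel
        _ = 1 - (G true true + (P - G true true) + (Q - G true true)) := by rw [ht]
        _ = 1 - P - Q + G true true := by abel
    have hPB0 : P * G false false = 0 := by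
      have h := hPB
      rw [sub_mul, one_mul, sub_eq_self] at h
      exact h
    have hBP0 : G false false * P = 0 := by
      have h := hBP
      rw [mul_sub, mul_one, sub_eq_self] at h
      exact h
    have h7 : P * Q = G true true := by
      have h := hPB0
      rw [hBform, mul_add, mul_sub, mul_sub, mul_one, hP, hPA, sub_self, zero_sub,
        neg_add_eq_zero] at h
      exact h
    have h8 : Q * P = G true true := by
      have h := hBP0
      rw [hBform, add_mul, sub_mul, sub_mul, one_mul, hP, hAP, sub_self, zero_sub,
        neg_add_eq_zero] at h
      exact h
    rw [Commute, SemiconjBy, h7, h8]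
  · intro hcomm
    have hc : P * Q = Q * P := hcomm
    have key : ∀ R S : Matrix (Fin d) (Fin d) ℂ, R * R = R → S * S = S →
        R.IsHermitian → S.IsHermitian → R * S = S * R → (R * S).PosSemidef := by
      intro R S hR hS hRh hSh hRS
      apply psd_of_proj
      · calc R * S * (R * S) = R * (S * R) * S := by noncomm_ring
          _ = R * (R * S) * S := by rw [hRS]
          _ = (R * R) * (S * S) := by noncomm_ring
          _ = R * S := by rw [hR, hS]
      · have h := conjTranspose_mul R S
        rw [Matrix.IsHermitian, h, hRh.eq, hSh.eq, ← hRS]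
    have c2 : P * (1 - Q) = (1 - Q) * P := by
      rw [mul_sub, sub_mul, mul_one, one_mul, hc]
    have c3 : (1 - P) * Q = Q * (1 - P) := by
      rw [sub_mul, mul_sub, mul_one, one_mul, hc]
    have c4 : (1 - P) * (1 - Q) = (1 - Q) * (1 - P) := by
      have e1 : (1 - P) * (1 - Q) = 1 - P - Q + P * Q := by noncomm_ring
      have e2 : (1 - Q) * (1 - P) = 1 - Q - P + Q * P := by noncomm_ring
      rw [e1, e2, hc]; abel
    refine ⟨fun i j => sharpPOVM P i * sharpPOVM Q j, ?_, ?_, ?_, ?_⟩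
    · intro i j
      cases i <;> cases j <;> simp only [sharpPOVM, if_true, if_false, Bool.false_eq_true]
      · exact key _ _ hP'idem hQ'idem hP'h hQ'h c4
      · exact key _ _ hP'idem hQ hP'h hQherm c3
      · exact key _ _ hP hQ'idem hPherm hQ'h c2
      · exact key _ _ hP hQ hPherm hQherm hc
    · simp only [Fintype.sum_bool, sharpPOVM, if_true, if_false, Bool.false_eq_true]
      have e1 : P * (1 - Q) = P - P * Q := by rw [mul_sub, mul_one]
      have e2 : (1 - P) * Q = Q - P * Q := by rw [sub_mul, one_mul]
      have e3 : (1 - P) * (1 - Q) = 1 - Q - (P - P * Q) := by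
        rw [sub_mul, one_mul, mul_sub, mul_one]
      rw [e1, e2, e3]; abel
    · intro i
      have h1 : sharpPOVM Q true + sharpPOVM Q false = 1 := by simp [sharpPOVM]
      rw [Fintype.sum_bool, ← mul_add, h1, mul_one]
    · intro j
      have h1 : sharpPOVM P true + sharpPOVM P false = 1 := by simp [sharpPOVM]
      rw [Fintype.sum_bool, ← add_mul, h1, one_mul]
end

section
/- Steering is preserved under invertible SLOCC on the characterized side: if the assemblage ρ_{x|k} admits no hidden state model, and K is an invertible operator on Bob's space, then the transformed assemblage K ρ_{x|k} K† / Tr[∑_x K ρ_{x|1} K†] also admits no hidden state model. -/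
open Matrix ComplexOrder

/-- Diagonal entries of a PSD complex matrix are nonnegative. -/
lemma psd_diag_nonneg {d : ℕ} {M : Matrix (Fin d) (Fin d) ℂ} (h : M.PosSemidef)
    (i : Fin d) : 0 ≤ M i i := by
  have := h.2 (Finsupp.single i 1)
  simpa using this

/-- Trace of a PSD complex matrix is nonnegative. -/
lemma psd_trace_nonneg {d : ℕ} {M : Matrix (Fin d) (Fin d) ℂ} (h : M.PosSemidef) :
    0 ≤ M.trace := by
  rw [Matrix.trace]
  exact Finset.sum_nonneg fun i _ => psd_diag_nonneg h i

/-- Scaling a PSD complex matrix by a nonnegative scalar preserves PSD. -/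
lemma psd_smul {d : ℕ} {c : ℂ} (hc : 0 ≤ c) {A : Matrix (Fin d) (Fin d) ℂ}
    (hA : A.PosSemidef) : (c • A).PosSemidef := by
  constructor
  · have hsc : star c = c := IsSelfAdjoint.of_nonneg hc
    unfold Matrix.IsHermitian
    rw [conjTranspose_smul, hA.1.eq, hsc]
  · intro x
    exact (hA.smul hc).2 x

theorem stmt_17 {d : ℕ} {K X : Type*} [Fintype X]
    (ρ : K → X → Matrix (Fin d) (Fin d) ℂ)
    (hpos : ∀ k x, (ρ k x).PosSemidef)
    (hnosig : ∀ k k', ∑ x, ρ k x = ∑ x, ρ k' x)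
    (k₀ : K) (htr : (∑ x, ρ k₀ x).trace = 1)
    (hsteer : ¬ HiddenStateModel ρ)
    (Kmat : Matrix (Fin d) (Fin d) ℂ) (hK : IsUnit Kmat) :
    ¬ HiddenStateModel (fun k x =>
      ((∑ y, Kmat * ρ k₀ y * Kmatᴴ).trace)⁻¹ • (Kmat * ρ k x * Kmatᴴ)) := by
  rintro ⟨m, σ, p, hσ, htrσ, hp0, hp1, heq⟩
  set c : ℂ := (∑ y, Kmat * ρ k₀ y * Kmatᴴ).trace with hc
  -- helper to collapse the x-sum of coefficients
  have hcoef : ∀ (lam : Fin m) (k : K), ∑ x, ((p lam k x : ℝ) : ℂ) = 1 := by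
    intro lam k
    rw [← Complex.ofReal_sum, hp1 lam k, Complex.ofReal_one]
  by_cases hc0 : c = 0
  · -- then the transformed assemblage is identically 0, contradicting trace 1
    have h0 : ∀ x : X, (0 : Matrix (Fin d) (Fin d) ℂ)
        = ∑ lam, ((p lam k₀ x : ℝ) : ℂ) • σ lam := by
      intro x
      have := heq k₀ x
      simp only [hc0, _root_.inv_zero, zero_smul] at this
      exact this
    have hz : (0 : Matrix (Fin d) (Fin d) ℂ) = ∑ lam, σ lam := by
      calc (0 : Matrix (Fin d) (Fin d) ℂ)
          = ∑ x : X, ∑ lam, ((p lam k₀ x : ℝ) : ℂ) • σ lam :=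
            (Finset.sum_eq_zero fun x _ => (h0 x).symm).symm
        _ = ∑ lam, ∑ x : X, ((p lam k₀ x : ℝ) : ℂ) • σ lam := Finset.sum_comm
        _ = ∑ lam, (∑ x : X, ((p lam k₀ x : ℝ) : ℂ)) • σ lam := by
            simp_rw [Finset.sum_smul]
        _ = ∑ lam, σ lam := by
            simp_rw [hcoef]
            simp
    have : (0 : ℂ) = 1 := by
      calc (0 : ℂ) = (0 : Matrix (Fin d) (Fin d) ℂ).trace := by simp
        _ = (∑ lam, σ lam).trace := by rw [hz]
        _ = ∑ lam, (σ lam).trace := trace_sum _ _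
        _ = 1 := htrσ
    exact zero_ne_one this
  · -- c is nonnegative (trace of a sum of PSD matrices)
    have hcnn : 0 ≤ c := by
      rw [hc, trace_sum]
      exact Finset.sum_nonneg fun y _ =>
        psd_trace_nonneg ((hpos k₀ y).mul_mul_conjTranspose_same Kmat)
    obtain ⟨u, hu⟩ := hK
    set L : Matrix (Fin d) (Fin d) ℂ := ↑u⁻¹ with hL
    have hLK : L * Kmat = 1 := by rw [hL, ← hu]; exact u.inv_mul
    have hKL : Kmat * L = 1 := by rw [hL, ← hu]; exact u.mul_inv
    set τ : Fin m → Matrix (Fin d) (Fin d) ℂ := fun lam => c • (L * σ lam * Lᴴ) with hτ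
    -- key identity
    have key : ∀ k x, ρ k x = ∑ lam, ((p lam k x : ℝ) : ℂ) • τ lam := by
      intro k x
      have h1 := heq k x
      simp only [← hc] at h1
      have h2 : Kmat * ρ k x * Kmatᴴ = c • ∑ lam, ((p lam k x : ℝ) : ℂ) • σ lam := by
        rw [← h1, smul_smul, mul_inv_cancel₀ hc0, one_smul]
      calc ρ k x = L * (Kmat * ρ k x * Kmatᴴ) * Lᴴ := by
            rw [show L * (Kmat * ρ k x * Kmatᴴ) * Lᴴ
                = (L * Kmat) * ρ k x * (L * Kmat)ᴴ by
              rw [conjTranspose_mul]; simp only [Matrix.mul_assoc]]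
            rw [hLK, conjTranspose_one, one_mul, mul_one]
        _ = L * (c • ∑ lam, ((p lam k x : ℝ) : ℂ) • σ lam) * Lᴴ := by rw [h2]
        _ = c • (L * (∑ lam, ((p lam k x : ℝ) : ℂ) • σ lam) * Lᴴ) := by
            rw [mul_smul_comm, smul_mul_assoc]
        _ = c • ∑ lam, ((p lam k x : ℝ) : ℂ) • (L * σ lam * Lᴴ) := by
            rw [Finset.mul_sum, Finset.sum_mul]
            simp_rw [mul_smul_comm, smul_mul_assoc]
        _ = ∑ lam, ((p lam k x : ℝ) : ℂ) • τ lam := by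
            rw [Finset.smul_sum]
            simp_rw [hτ, smul_comm c]
    -- trace normalization for τ
    have hsum : ∑ lam, τ lam = ∑ x, ρ k₀ x := by
      calc ∑ lam, τ lam
          = ∑ lam, (∑ x : X, ((p lam k₀ x : ℝ) : ℂ)) • τ lam := by
            simp_rw [hcoef]; simp
        _ = ∑ lam, ∑ x : X, ((p lam k₀ x : ℝ) : ℂ) • τ lam := by
            simp_rw [Finset.sum_smul]
        _ = ∑ x : X, ∑ lam, ((p lam k₀ x : ℝ) : ℂ) • τ lam := Finset.sum_comm
        _ = ∑ x, ρ k₀ x := by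
            exact Finset.sum_congr rfl fun x _ => (key k₀ x).symm
    refine hsteer ⟨m, τ, p, fun lam => ?_, ?_, hp0, hp1, key⟩
    · exact psd_smul hcnn ((hσ lam).mul_mul_conjTranspose_same L)
    · rw [← trace_sum, hsum, htr]
end
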